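/- arXiv:2410.20931 — 5 statements merged into one kernel-verified Lean document; each statement's English description precedes it below -/
import Mathlib

section
/- The transport matrix M_tr defined by (M_tr)_{kk} = |e_k|/Δt + c_k, (M_tr)_{ki} = -c_k w_i for edges e_i incoming to edge e_k's inflow node (where w_i = c_i / ∑_{e_l outgoing from that node} c_l), and 0 otherwise, has every column sum equal to |e_i|/Δt > 0, provided every internal node has at least one outgoing edge and all velocities c_k are positive. -/
open Matrix Finset in
/-- Transport matrix on a directed graph: edges `Fin ne`, nodes `V`.
`head k` is the inflow endpoint of edge `k` (where mass enters the edge),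
`tail k` is the node from which edge `k` is outgoing.
Edge `i` is incoming to edge `k`'s inflow node when `tail k = head i`. -/
theorem transport_matrix_column_sums
    {ne : ℕ} {V : Type*} [Fintype V] [DecidableEq V]
    (head tail : Fin ne → V)
    (len c : Fin ne → ℝ) (Δt : ℝ)
    (hlen : ∀ k, 0 < len k) (hc : ∀ k, 0 < c k) (hΔt : 0 < Δt)
    (hnoloop : ∀ k, tail k ≠ head k)
    (hout : ∀ i, ∃ l, tail l = head i)
    (w : Fin ne → ℝ)
    (hw : ∀ i, w i = c i / ∑ l ∈ Finset.univ.filter (fun l => tail l = head i), c l)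
    (M : Matrix (Fin ne) (Fin ne) ℝ)
    (hM : ∀ k i, M k i =
      if k = i then len k / Δt + c k
      else if tail k = head i then -(c k * w i) else 0) :
    ∀ i, (∑ k, M k i) = len i / Δt ∧ 0 < len i / Δt := by
  intro i
  set S := ∑ l ∈ Finset.univ.filter (fun l => tail l = head i), c l with hS
  have hSpos : 0 < S := by
    obtain ⟨l, hl⟩ := hout i
    exact Finset.sum_pos' (fun k _ => (hc k).le)
      ⟨l, Finset.mem_filter.mpr ⟨Finset.mem_univ l, hl⟩, hc l⟩
  have hi_not : i ∉ Finset.univ.filter (fun l => tail l = head i) := by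
    simp [hnoloop i]
  have hsum : (∑ k, M k i) = len i / Δt := by
    have hsplit : (∑ k, M k i) = M i i + ∑ k ∈ Finset.univ.erase i, M k i :=
      (Finset.add_sum_erase _ _ (Finset.mem_univ i)).symm
    have h2 : ∑ k ∈ Finset.univ.erase i, M k i
        = ∑ k ∈ Finset.univ.filter (fun l => tail l = head i), -(c k * w i) := by
      rw [show (∑ k ∈ Finset.univ.erase i, M k i)
          = ∑ k ∈ Finset.univ.erase i, (if tail k = head i then -(c k * w i) else 0) from
        Finset.sum_congr rfl (fun k hk => by simp [hM, Finset.ne_of_mem_erase hk]),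
        Finset.sum_erase _ (by simp [hnoloop i]), ← Finset.sum_filter]
    have h3 : ∑ k ∈ Finset.univ.filter (fun l => tail l = head i), -(c k * w i)
        = -(S * w i) := by
      rw [hS, Finset.sum_neg_distrib, ← Finset.sum_mul]
    rw [hsplit, h2, h3, hM i i, if_pos rfl, hw i, ← hS]
    field_simp
    ring
  exact ⟨hsum, div_pos (hlen i) hΔt⟩
end

section
/- A symmetric Z-matrix that is positive definite is inverse-positive: its inverse exists and has all nonnegative entries. -/
open Matrix in
theorem stieltjes_matrix_inverse_positive
    {N : ℕ} (A : Matrix (Fin N) (Fin N) ℝ)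
    (hZ : ∀ i j, i ≠ j → A i j ≤ 0)
    (hpd : A.PosDef) :
    IsUnit A.det ∧ ∀ i j, 0 ≤ A⁻¹ i j := by
  have hdet : IsUnit A.det := isUnit_iff_ne_zero.mpr hpd.det_pos.ne'
  refine ⟨hdet, ?_⟩
  intro i j
  set x : Fin N → ℝ := fun k => A⁻¹ k j with hxdef
  have hAx : A.mulVec x = Pi.single j 1 := by
    have h1 : A * A⁻¹ = 1 := mul_nonsing_inv A hdet
    have h2 : A.mulVec (A⁻¹.mulVec (Pi.single j 1)) = Pi.single j 1 := by
      rw [mulVec_mulVec, h1, one_mulVec]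
    have h3 : A⁻¹.mulVec (Pi.single j 1) = x := by
      funext k
      simp [mulVec_single, hxdef]
    rwa [h3] at h2
  set p : Fin N → ℝ := fun k => max (x k) 0 with hpdef
  set n : Fin N → ℝ := fun k => max (-(x k)) 0 with hndef
  have hp : ∀ k, 0 ≤ p k := fun k => le_max_right _ _
  have hn : ∀ k, 0 ≤ n k := fun k => le_max_right _ _
  have hpn : x = p - n := by
    funext k
    simp only [Pi.sub_apply, hpdef, hndef]
    rw [max_zero_sub_max_neg_zero_eq_self]
  have hdisj : ∀ k, n k * p k = 0 := by
    intro k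
    rcases le_total (x k) 0 with h | h
    · have : p k = 0 := max_eq_right h
      simp [this]
    · have : n k = 0 := max_eq_right (neg_nonpos.mpr h)
      simp [this]
  have key : n ⬝ᵥ A.mulVec x = n j := by
    rw [hAx, dotProduct_single, mul_one]
  have hsplit : n ⬝ᵥ A.mulVec x = n ⬝ᵥ A.mulVec p - n ⬝ᵥ A.mulVec n := by
    rw [hpn, mulVec_sub, dotProduct_sub]
  have hnp : n ⬝ᵥ A.mulVec p ≤ 0 := by
    rw [dotProduct]
    apply Finset.sum_nonpos
    intro a _
    rw [mulVec, dotProduct, Finset.mul_sum]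
    apply Finset.sum_nonpos
    intro b _
    rcases eq_or_ne a b with rfl | hab
    · have h0 : n a * (A a a * p a) = A a a * (n a * p a) := by ring
      rw [h0, hdisj a, mul_zero]
    · have h1 := hZ a b hab
      have := mul_nonneg (hn a) (hp b)
      nlinarith
  have hAn : n ⬝ᵥ A.mulVec n ≤ 0 := by
    have := hn j
    linarith [key, hsplit]
  have hn0 : n = 0 := by
    by_contra h
    have := hpd.re_dotProduct_pos (x := n) h
    simp only [RCLike.re_to_real, star_trivial] at this
    linarith
  have : x i = p i := by rw [hpn]; simp [hn0]
  calc (0:ℝ) ≤ p i := hp i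
    _ = x i := this.symm
end

section
/- Haynsworth inertia additivity: if A is a Hermitian matrix and A_{11} is a nonsingular principal submatrix, then In(A) = In(A_{11}) + In(A/A_{11}), where A/A_{11} is the Schur complement. -/
open Matrix Polynomial Finset
open scoped RealInnerProductSpace

set_option linter.unusedSectionVars false

section Haynsworth

variable {ι : Type*} [Fintype ι] [DecidableEq ι]


lemma charpoly_conj_units (U D V : Matrix ι ι ℝ) (hUV : U * V = 1) :
    (U * D * V).charpoly = D.charpoly := by
  have h1 : (U.map (⇑(C : ℝ →+* ℝ[X]))) * (V.map ⇑(C : ℝ →+* ℝ[X])) = 1 := by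
    rw [← Matrix.map_mul, hUV]
    simp
  have hc : charmatrix (U * D * V) =
      U.map C * charmatrix D * V.map C := by
    unfold charmatrix
    rw [Matrix.mul_sub, Matrix.sub_mul]
    congr 1
    · rw [Matrix.scalar_apply, ← Matrix.smul_one_eq_diagonal, Matrix.mul_smul,
        Matrix.smul_mul, Matrix.mul_one]
      exact congrArg _ h1.symm
    · simp [RingHom.mapMatrix_apply, ← Matrix.map_mul, Matrix.mul_assoc]
  have hdet : det (U.map ⇑(C : ℝ →+* ℝ[X])) * det (V.map ⇑(C : ℝ →+* ℝ[X])) = 1 := by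
    rw [← det_mul, h1, det_one]
  rw [Matrix.charpoly, hc, det_mul, det_mul, Matrix.charpoly]
  calc (U.map ⇑(C : ℝ →+* ℝ[X])).det * (charmatrix D).det * (V.map ⇑(C : ℝ →+* ℝ[X])).det
      = (charmatrix D).det
        * ((U.map ⇑(C : ℝ →+* ℝ[X])).det * (V.map ⇑(C : ℝ →+* ℝ[X])).det) := by ring
    _ = (charmatrix D).det := by rw [hdet, mul_one]

lemma charpoly_eq_prod_eigs (M : Matrix ι ι ℝ) (hM : M.IsHermitian) :
    M.charpoly = ∏ i, (X - C (hM.eigenvalues i)) := by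
  have hs := hM.spectral_theorem
  have hd : (diagonal (RCLike.ofReal ∘ hM.eigenvalues) : Matrix ι ι ℝ).charpoly
      = ∏ i, (X - C (hM.eigenvalues i)) := by
    rw [Matrix.charpoly]
    have : charmatrix (diagonal (RCLike.ofReal ∘ hM.eigenvalues) : Matrix ι ι ℝ)
        = diagonal (fun i => X - C (hM.eigenvalues i)) := by
      unfold charmatrix
      rw [Matrix.scalar_apply]
      ext i j
      by_cases h : i = j <;> simp [h, diagonal, RingHom.mapMatrix_apply]
    rw [this, det_diagonal]
  rw [← hd]
  conv_lhs => rw [hs]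
  exact charpoly_conj_units _ _ _ (Matrix.mem_unitaryGroup_iff.mp (hM.eigenvectorUnitary).2)

lemma card_filter_eigs_eq_roots (M : Matrix ι ι ℝ) (hM : M.IsHermitian)
    (P : ℝ → Prop) [DecidablePred P] :
    (univ.filter fun i => P (hM.eigenvalues i)).card
      = Multiset.card (M.charpoly.roots.filter P) := by
  have h1 : M.charpoly = ((univ.val.map hM.eigenvalues).map fun a => X - C a).prod := by
    rw [charpoly_eq_prod_eigs M hM, Multiset.map_map]
    rfl
  rw [h1, roots_multiset_prod_X_sub_C, Multiset.filter_map, Multiset.card_map]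
  rfl

lemma count_blockdiag {n m : ℕ} (B : Matrix (Fin n) (Fin n) ℝ) (S : Matrix (Fin m) (Fin m) ℝ)
    (hB : B.IsHermitian) (hS : S.IsHermitian)
    (hD : (fromBlocks B 0 0 S).IsHermitian) (P : ℝ → Prop) [DecidablePred P] :
    (univ.filter fun i => P (hD.eigenvalues i)).card
      = (univ.filter fun i => P (hB.eigenvalues i)).card
        + (univ.filter fun i => P (hS.eigenvalues i)).card := by
  rw [card_filter_eigs_eq_roots _ hD P, card_filter_eigs_eq_roots _ hB P,
    card_filter_eigs_eq_roots _ hS P]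
  rw [Matrix.charpoly_fromBlocks_zero₂₁, Polynomial.roots_mul
    (mul_ne_zero (Matrix.charpoly_monic B).ne_zero (Matrix.charpoly_monic S).ne_zero),
    Multiset.filter_add, Multiset.card_add]

noncomputable def quad (M : Matrix ι ι ℝ) (x : EuclideanSpace ℝ ι) : ℝ :=
  ⇑x ⬝ᵥ (M *ᵥ ⇑x)

lemma inner_eq_dot (x y : EuclideanSpace ℝ ι) : (inner ℝ x y : ℝ) = ⇑x ⬝ᵥ ⇑y := by
  simp [PiLp.inner_apply, RCLike.inner_apply, dotProduct, mul_comm]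

lemma quad_eq_inner (M : Matrix ι ι ℝ) (x : EuclideanSpace ℝ ι) :
    quad M x = (inner ℝ x (Matrix.toEuclideanLin M x) : ℝ) := by
  rw [inner_eq_dot]
  rfl

lemma quad_eq_sum (M : Matrix ι ι ℝ) (hM : M.IsHermitian) (x : EuclideanSpace ℝ ι) :
    quad M x = ∑ i, hM.eigenvalues i * (hM.eigenvectorBasis.repr x i)^2 := by
  set v := hM.eigenvectorBasis with hv
  set c : ι → ℝ := fun i => v.repr x i with hc
  have hTv : ∀ i, Matrix.toEuclideanLin M (v i) = hM.eigenvalues i • v i := by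
    intro i
    apply (WithLp.equiv 2 _).injective
    have := hM.mulVec_eigenvectorBasis i
    simpa [Matrix.toEuclideanLin_apply] using this
  have hx : x = ∑ i, c i • v i := (v.sum_repr x).symm
  rw [quad_eq_inner]
  conv_lhs => rw [hx]
  rw [map_sum, inner_sum]
  have key : ∀ i, (inner ℝ (∑ j, c j • v j : EuclideanSpace ℝ ι)
        (Matrix.toEuclideanLin M (c i • v i)) : ℝ) = hM.eigenvalues i * c i ^ 2 := by
    intro i
    rw [_root_.map_smul, hTv i, real_inner_smul_right, real_inner_smul_right, ← hx,
      real_inner_comm, ← OrthonormalBasis.repr_apply_apply]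
    ring
  rw [Finset.sum_congr rfl (fun i _ => key i)]



noncomputable def eigSpan (M : Matrix ι ι ℝ) (hM : M.IsHermitian) (s : Finset ι) :
    Submodule ℝ (EuclideanSpace ℝ ι) :=
  Submodule.span ℝ (Set.range fun i : {i // i ∈ s} => hM.eigenvectorBasis i)

lemma finrank_eigSpan (M : Matrix ι ι ℝ) (hM : M.IsHermitian) (s : Finset ι) :
    Module.finrank ℝ (eigSpan M hM s) = s.card := by
  have hli : LinearIndependent ℝ (fun i : {i // i ∈ s} => hM.eigenvectorBasis i) := by
    have := hM.eigenvectorBasis.toBasis.linearIndependent.comp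
      ((↑) : {i // i ∈ s} → ι) Subtype.val_injective
    exact this
  rw [eigSpan, finrank_span_eq_card hli, Fintype.card_coe]

lemma eigSpan_repr_eq_zero (M : Matrix ι ι ℝ) (hM : M.IsHermitian) (s : Finset ι)
    {x : EuclideanSpace ℝ ι} (hx : x ∈ eigSpan M hM s) {j : ι} (hj : j ∉ s) :
    hM.eigenvectorBasis.repr x j = 0 := by
  set v := hM.eigenvectorBasis
  let L : EuclideanSpace ℝ ι →ₗ[ℝ] ℝ :=
    { toFun := fun y => v.repr y j
      map_add' := by intro a b; simp
      map_smul' := by intro r a; simp }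
  have hle : eigSpan M hM s ≤ LinearMap.ker L := by
    rw [eigSpan, Submodule.span_le]
    rintro _ ⟨i, rfl⟩
    simp only [SetLike.mem_coe, LinearMap.mem_ker]
    show v.repr (v i) j = 0
    rw [OrthonormalBasis.repr_self]
    have : (j : ι) ≠ i := fun h => hj (h ▸ i.2)
    simp [EuclideanSpace.single_apply, this]
  exact hle hx

lemma eigSpan_exists_ne_zero (M : Matrix ι ι ℝ) (hM : M.IsHermitian) (s : Finset ι)
    {x : EuclideanSpace ℝ ι} (hx : x ∈ eigSpan M hM s) (hx0 : x ≠ 0) :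
    ∃ i ∈ s, hM.eigenvectorBasis.repr x i ≠ 0 := by
  by_contra h
  push_neg at h
  apply hx0
  have : hM.eigenvectorBasis.repr x = 0 := by
    ext i
    by_cases hi : i ∈ s
    · simpa using h i hi
    · simpa using eigSpan_repr_eq_zero M hM s hx hi
  simpa using hM.eigenvectorBasis.repr.injective (by simpa using this)

lemma quad_pos_on_eigSpan (M : Matrix ι ι ℝ) (hM : M.IsHermitian) (s : Finset ι) (σ : ℝ)
    (hs : ∀ i ∈ s, 0 < σ * hM.eigenvalues i)
    {x : EuclideanSpace ℝ ι} (hx : x ∈ eigSpan M hM s) (hx0 : x ≠ 0) :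
    0 < σ * quad M x := by
  rw [quad_eq_sum M hM, Finset.mul_sum]
  obtain ⟨i₀, hi₀s, hi₀⟩ := eigSpan_exists_ne_zero M hM s hx hx0
  apply Finset.sum_pos'
  · intro i _
    by_cases hi : i ∈ s
    · have := (hs i hi).le
      nlinarith [sq_nonneg (hM.eigenvectorBasis.repr x i)]
    · rw [eigSpan_repr_eq_zero M hM s hx hi]
      simp
  · refine ⟨i₀, mem_univ _, ?_⟩
    have h1 := hs i₀ hi₀s
    have h2 : 0 < (hM.eigenvectorBasis.repr x i₀)^2 := by positivity
    nlinarith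

lemma quad_nonpos_on_eigSpan (M : Matrix ι ι ℝ) (hM : M.IsHermitian) (s : Finset ι) (σ : ℝ)
    (hs : ∀ i ∈ s, σ * hM.eigenvalues i ≤ 0)
    {x : EuclideanSpace ℝ ι} (hx : x ∈ eigSpan M hM s) :
    σ * quad M x ≤ 0 := by
  rw [quad_eq_sum M hM, Finset.mul_sum]
  apply Finset.sum_nonpos
  intro i _
  by_cases hi : i ∈ s
  · have := hs i hi
    nlinarith [sq_nonneg (hM.eigenvectorBasis.repr x i)]
  · rw [eigSpan_repr_eq_zero M hM s hx hi]
    simp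





lemma finrank_le_count (M : Matrix ι ι ℝ) (hM : M.IsHermitian) (σ : ℝ)
    (W : Submodule ℝ (EuclideanSpace ℝ ι))
    (hW : ∀ x ∈ W, x ≠ 0 → 0 < σ * quad M x) :
    Module.finrank ℝ W ≤ (univ.filter fun i => 0 < σ * hM.eigenvalues i).card := by
  classical
  set s : Finset ι := univ.filter fun i => 0 < σ * hM.eigenvalues i with hs
  set W' := eigSpan M hM sᶜ with hW'
  have h1 : ∀ x ∈ W', σ * quad M x ≤ 0 := by
    intro x hx
    refine quad_nonpos_on_eigSpan M hM sᶜ σ ?_ hx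
    intro i hi
    have : i ∉ s := Finset.mem_compl.mp hi
    simp only [hs, Finset.mem_filter, Finset.mem_univ, true_and] at this
    linarith [not_lt.mp this]
  have hdisj : W ⊓ W' = ⊥ := by
    rw [Submodule.eq_bot_iff]
    rintro x ⟨hxW, hxW'⟩
    by_contra h0
    exact absurd (h1 x hxW') (not_le.mpr (hW x hxW h0))
  have hsum := Submodule.finrank_sup_add_finrank_inf_eq W W'
  rw [hdisj, finrank_bot] at hsum
  have h2 : Module.finrank ℝ ↥(W ⊔ W') ≤ Fintype.card ι := by
    refine le_trans (Submodule.finrank_le _) ?_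
    simp [finrank_euclideanSpace]
  have h3 : Module.finrank ℝ W' = sᶜ.card := finrank_eigSpan M hM sᶜ
  have h4 : sᶜ.card + s.card = Fintype.card ι := by
    rw [Finset.card_compl]
    have hcard : s.card ≤ Fintype.card ι := by
      rw [hs]
      simpa using Finset.card_filter_le univ (fun i => 0 < σ * hM.eigenvalues i)
    omega
  have h5 : (univ.filter fun i => 0 < σ * hM.eigenvalues i).card = s.card := rfl
  omega

lemma count_le_count_of_congr (M N P : Matrix ι ι ℝ) (hM : M.IsHermitian) (hN : N.IsHermitian)
    (hP : IsUnit P.det) (hNP : N = Pᵀ * M * P) (σ : ℝ) :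
    (univ.filter fun i => 0 < σ * hN.eigenvalues i).card
      ≤ (univ.filter fun i => 0 < σ * hM.eigenvalues i).card := by
  classical
  haveI := P.invertibleOfIsUnitDet hP
  set s : Finset ι := univ.filter fun i => 0 < σ * hN.eigenvalues i with hs
  set W := eigSpan N hN s with hWdef
  let L : EuclideanSpace ℝ ι →ₗ[ℝ] EuclideanSpace ℝ ι := Matrix.toEuclideanLin P
  have hL : ∀ x : EuclideanSpace ℝ ι, ⇑(L x) = P *ᵥ ⇑x := fun x => rfl
  have hinj : Function.Injective L := by
    intro x y hxy
    have h1 : P *ᵥ ⇑x = P *ᵥ ⇑y := by rw [← hL, ← hL, hxy]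
    have h2 : ⅟P *ᵥ (P *ᵥ ⇑x) = ⅟P *ᵥ (P *ᵥ ⇑y) := by rw [h1]
    rw [mulVec_mulVec, mulVec_mulVec, invOf_mul_self, one_mulVec, one_mulVec] at h2
    exact (WithLp.equiv 2 _).injective h2
  have hquad : ∀ x : EuclideanSpace ℝ ι, quad M (L x) = quad N x := by
    intro x
    rw [quad, quad, hL, hNP]
    rw [← mulVec_mulVec, ← mulVec_mulVec, Matrix.dotProduct_mulVec ⇑x Pᵀ,
      Matrix.vecMul_transpose]
  have key : ∀ y ∈ W.map L, y ≠ 0 → 0 < σ * quad M y := by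
    rintro _ ⟨x, hxW, rfl⟩ hy0
    have hx0 : x ≠ 0 := by rintro rfl; simp at hy0
    rw [hquad]
    refine quad_pos_on_eigSpan N hN s σ ?_ hxW hx0
    intro i hi
    simpa [hs] using hi
  have h1 : Module.finrank ℝ (W.map L) ≤ _ := finrank_le_count M hM σ (W.map L) key
  have h2 : Module.finrank ℝ (W.map L) = Module.finrank ℝ W :=
    (LinearEquiv.finrank_eq (Submodule.equivMapOfInjective L hinj W)).symm
  have h3 : Module.finrank ℝ W = s.card := finrank_eigSpan N hN s
  omega

lemma count_eq_count_of_congr (M N P : Matrix ι ι ℝ) (hM : M.IsHermitian) (hN : N.IsHermitian)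
    (hP : IsUnit P.det) (hNP : N = Pᵀ * M * P) (σ : ℝ) :
    (univ.filter fun i => 0 < σ * hN.eigenvalues i).card
      = (univ.filter fun i => 0 < σ * hM.eigenvalues i).card := by
  refine le_antisymm (count_le_count_of_congr M N P hM hN hP hNP σ) ?_
  refine count_le_count_of_congr N M P⁻¹ hN hM (P.isUnit_nonsing_inv_det hP) ?_ σ
  rw [hNP, Matrix.transpose_nonsing_inv]
  have h1 : P * P⁻¹ = 1 := Matrix.mul_nonsing_inv P hP
  have h2 : Pᵀ⁻¹ * Pᵀ = 1 := by
    rw [← Matrix.transpose_nonsing_inv, ← Matrix.transpose_mul, h1, Matrix.transpose_one]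
  symm
  calc Pᵀ⁻¹ * (Pᵀ * M * P) * P⁻¹ = (Pᵀ⁻¹ * Pᵀ) * M * (P * P⁻¹) := by
        noncomm_ring
    _ = M := by rw [h1, h2, Matrix.one_mul, Matrix.mul_one]

lemma trichotomy_count (μ : ι → ℝ) :
    (univ.filter fun i => 0 < μ i).card + (univ.filter fun i => μ i < 0).card
      + (univ.filter fun i => μ i = 0).card = Fintype.card ι := by
  classical
  rw [Finset.card_filter, Finset.card_filter, Finset.card_filter,
    ← Finset.sum_add_distrib, ← Finset.sum_add_distrib, ← Finset.card_univ,
    Finset.card_eq_sum_ones]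
  refine Finset.sum_congr rfl fun i _ => ?_
  rcases lt_trichotomy (μ i) 0 with h|h|h
  · simp [h, h.ne, asymm h]
  · simp [h]
  · simp [h, h.ne', asymm h]

-- test sign conversions
example (μ : ι → ℝ) :
    (univ.filter fun i => 0 < (1:ℝ) * μ i) = (univ.filter fun i => 0 < μ i) := by
  simp only [one_mul]

example (μ : ι → ℝ) :
    (univ.filter fun i => 0 < (-1:ℝ) * μ i) = (univ.filter fun i => μ i < 0) := by
  simp only [neg_mul, one_mul, neg_pos]

end Haynsworth

open Matrix Finset in
theorem haynsworth_inertia_additivity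
    {n m : ℕ} (A11 : Matrix (Fin n) (Fin n) ℝ)
    (A12 : Matrix (Fin n) (Fin m) ℝ) (A22 : Matrix (Fin m) (Fin m) ℝ)
    (hA : (Matrix.fromBlocks A11 A12 A12ᵀ A22).IsHermitian)
    (h11 : A11.IsHermitian)
    (h11inv : IsUnit A11.det)
    (hS : (A22 - A12ᵀ * A11⁻¹ * A12).IsHermitian) :
    ((Finset.univ.filter (fun i => 0 < hA.eigenvalues i)).card
        = (Finset.univ.filter (fun i => 0 < h11.eigenvalues i)).card
          + (Finset.univ.filter (fun i => 0 < hS.eigenvalues i)).card) ∧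
    ((Finset.univ.filter (fun i => hA.eigenvalues i < 0)).card
        = (Finset.univ.filter (fun i => h11.eigenvalues i < 0)).card
          + (Finset.univ.filter (fun i => hS.eigenvalues i < 0)).card) ∧
    ((Finset.univ.filter (fun i => hA.eigenvalues i = 0)).card
        = (Finset.univ.filter (fun i => h11.eigenvalues i = 0)).card
          + (Finset.univ.filter (fun i => hS.eigenvalues i = 0)).card) := by
  classical
  haveI := A11.invertibleOfIsUnitDet h11inv
  set S : Matrix (Fin m) (Fin m) ℝ := A22 - A12ᵀ * A11⁻¹ * A12 with hSdef
  set D : Matrix (Fin n ⊕ Fin m) (Fin n ⊕ Fin m) ℝ := fromBlocks A11 0 0 S with hDdef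
  set P : Matrix (Fin n ⊕ Fin m) (Fin n ⊕ Fin m) ℝ := fromBlocks 1 (A11⁻¹ * A12) 0 1 with hPdef
  have h11t : A11ᵀ = A11 := by
    rw [← Matrix.conjTranspose_eq_transpose_of_trivial]; exact h11
  have hD : D.IsHermitian := by
    rw [Matrix.IsHermitian, hDdef, Matrix.fromBlocks_conjTranspose]
    rw [h11, hS, Matrix.conjTranspose_zero]
    rw [show (0 : Matrix (Fin n) (Fin m) ℝ)ᴴ = 0 from Matrix.conjTranspose_zero]
  have hfac : fromBlocks A11 A12 A12ᵀ A22 = Pᵀ * D * P := by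
    have h := Matrix.fromBlocks_eq_of_invertible₁₁ A11 A12 A12ᵀ A22
    rw [Matrix.invOf_eq_nonsing_inv] at h
    rw [h, hPdef, hDdef, hSdef]
    congr 1
    congr 1
    rw [Matrix.fromBlocks_transpose, Matrix.transpose_one, Matrix.transpose_zero,
      Matrix.transpose_mul, Matrix.transpose_nonsing_inv, h11t, Matrix.transpose_one]
  have hPdet : IsUnit P.det := by
    rw [hPdef, Matrix.det_fromBlocks_zero₂₁, Matrix.det_one, one_mul, Matrix.det_one]
    exact isUnit_one
  -- positive counts
  have hpos : ∀ σ : ℝ, (univ.filter fun i => 0 < σ * hA.eigenvalues i).card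
      = (univ.filter fun i => 0 < σ * h11.eigenvalues i).card
        + (univ.filter fun i => 0 < σ * hS.eigenvalues i).card := by
    intro σ
    rw [count_eq_count_of_congr D _ P hD hA hPdet hfac σ]
    exact count_blockdiag A11 S h11 hS hD (fun x => 0 < σ * x)
  have hp := hpos 1
  have hn := hpos (-1)
  simp only [one_mul] at hp
  simp only [neg_mul, one_mul, neg_pos] at hn
  refine ⟨hp, hn, ?_⟩
  have t1 := trichotomy_count hA.eigenvalues
  have t2 := trichotomy_count h11.eigenvalues
  have t3 := trichotomy_count hS.eigenvalues
  simp only [Fintype.card_sum, Fintype.card_fin] at t1 t2 t3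
  omega
end

section
/- If M is a Z-matrix such that M = A₁ + A₂ where A₁ is a Z-matrix with nonnegative column sums and positive diagonal, and A₂ is a symmetric Z-matrix with nonnegative row sums (positive on at least one row) satisfying the SC property on the union of sparsity patterns, then Mᵀ is weakly diagonally dominant by rows with strict dominance in at least one row; if additionally M satisfies the SC property, M is invertible. -/
open Matrix Finset in
theorem drift_diffusion_matrix_sum_dominant_and_invertible
    {N : ℕ} (M A1 A2 : Matrix (Fin N) (Fin N) ℝ)
    (hsum : M = A1 + A2)
    (hMZ : ∀ i j, i ≠ j → M i j ≤ 0)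
    (hA1Z : ∀ i j, i ≠ j → A1 i j ≤ 0)
    (hA1col : ∀ j, 0 ≤ ∑ i, A1 i j)
    (hA1diag : ∀ i, 0 < A1 i i)
    (hA2Z : ∀ i j, i ≠ j → A2 i j ≤ 0)
    (hA2symm : A2.IsSymm)
    (hA2row : ∀ i, 0 ≤ ∑ j, A2 i j)
    (hA2strict : ∃ i, 0 < ∑ j, A2 i j) :
    ((∀ i, ∑ j ∈ Finset.univ.erase i, |Mᵀ i j| ≤ |Mᵀ i i|) ∧
      (∃ i, ∑ j ∈ Finset.univ.erase i, |Mᵀ i j| < |Mᵀ i i|)) ∧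
    ((∀ p q : Fin N, p ≠ q → ∃ (k : ℕ) (c : Fin (k + 2) → Fin N),
        Function.Injective c ∧ c 0 = p ∧ c (Fin.last (k + 1)) = q ∧
        ∀ l : Fin (k + 1), M (c l.castSucc) (c l.succ) ≠ 0) →
      IsUnit M.det) := by
  -- column sums of M
  have hMcolsum : ∀ j, ∑ i, M i j = (∑ i, A1 i j) + ∑ l, A2 j l := by
    intro j
    have h2' : ∀ i, A2 i j = A2 j i := fun i => (hA2symm.apply j i)
    calc ∑ i, M i j = ∑ i, (A1 i j + A2 i j) := by
          refine Finset.sum_congr rfl fun i _ => ?_; rw [hsum]; rfl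
      _ = (∑ i, A1 i j) + ∑ i, A2 i j := Finset.sum_add_distrib
      _ = (∑ i, A1 i j) + ∑ l, A2 j l := by
          congr 1; exact Finset.sum_congr rfl fun i _ => h2' i
  have hcol : ∀ j, 0 ≤ ∑ i, M i j := fun j => by
    rw [hMcolsum j]; have := hA1col j; have := hA2row j; linarith
  -- the key identity for off-diagonal absolute column sums
  have hkey : ∀ i, ∑ j ∈ Finset.univ.erase i, |M j i| = M i i - ∑ j, M j i := by
    intro i
    have : ∀ j ∈ Finset.univ.erase i, |M j i| = -(M j i) := by
      intro j hj
      exact abs_of_nonpos (hMZ j i (Finset.ne_of_mem_erase hj))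
    rw [Finset.sum_congr rfl this, Finset.sum_neg_distrib,
      Finset.sum_erase_eq_sub (Finset.mem_univ i)]
    ring
  have hMdiag : ∀ i, 0 ≤ M i i := by
    intro i
    have h1 : 0 ≤ ∑ j ∈ Finset.univ.erase i, |M j i| :=
      Finset.sum_nonneg fun j _ => abs_nonneg _
    have := hkey i; have := hcol i; linarith
  -- weak diagonal dominance of columns
  have hdom : ∀ i, ∑ j ∈ Finset.univ.erase i, |M j i| ≤ |M i i| := by
    intro i
    rw [hkey i, abs_of_nonneg (hMdiag i)]
    have := hcol i; linarith
  -- the strict index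
  obtain ⟨i₁, hi₁⟩ := hA2strict
  have hstrictcol : 0 < ∑ i, M i i₁ := by
    rw [hMcolsum i₁]; have := hA1col i₁; linarith
  have hdoms : ∑ j ∈ Finset.univ.erase i₁, |M j i₁| < |M i₁ i₁| := by
    rw [hkey i₁, abs_of_nonneg (hMdiag i₁)]; linarith
  constructor
  · constructor
    · intro i; simpa [Matrix.transpose_apply] using hdom i
    · exact ⟨i₁, by simpa [Matrix.transpose_apply] using hdoms⟩
  -- invertibility
  intro hSC
  rw [isUnit_iff_ne_zero]
  by_contra hdet

  have hdetT : Mᵀ.det = 0 := by rw [Matrix.det_transpose]; exact hdet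
  obtain ⟨v, hv0, hv⟩ := Matrix.exists_mulVec_eq_zero_iff.mpr hdetT
  obtain ⟨k₀, hk₀⟩ := Function.ne_iff.mp hv0
  have hNe : Nonempty (Fin N) := ⟨k₀⟩
  obtain ⟨i₀, -, hmax⟩ := Finset.exists_max_image Finset.univ (fun i => |v i|)
    Finset.univ_nonempty
  set m := |v i₀| with hm
  have hle : ∀ j, |v j| ≤ m := fun j => hmax j (Finset.mem_univ j)
  have hm0 : 0 < m := lt_of_lt_of_le (abs_pos.mpr hk₀) (hle k₀)
  -- the basic inequality from Mᵀ v = 0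
  have hEq : ∀ i, |M i i| * |v i| ≤ ∑ j ∈ Finset.univ.erase i, |M j i| * |v j| := by
    intro i
    have h0 : ∑ j, M j i * v j = 0 := by
      have := congrFun hv i
      simpa [Matrix.mulVec, dotProduct, Matrix.transpose_apply] using this
    have heq : M i i * v i = -∑ j ∈ Finset.univ.erase i, M j i * v j := by
      rw [Finset.sum_erase_eq_sub (Finset.mem_univ i), h0]; ring
    calc |M i i| * |v i| = |M i i * v i| := (abs_mul _ _).symm
      _ = |∑ j ∈ Finset.univ.erase i, M j i * v j| := by rw [heq, abs_neg]
      _ ≤ ∑ j ∈ Finset.univ.erase i, |M j i * v j| := Finset.abs_sum_le_sum_abs _ _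
      _ = ∑ j ∈ Finset.univ.erase i, |M j i| * |v j| := by
          exact Finset.sum_congr rfl fun j _ => abs_mul _ _
  -- propagation of maximality
  have hS : ∀ i, |v i| = m → ∀ j, j ≠ i → M j i ≠ 0 → |v j| = m := by
    intro i hi j hji hMji
    have h1 : |M i i| * m ≤ ∑ j ∈ Finset.univ.erase i, |M j i| * |v j| := by
      rw [← hi]; exact hEq i
    have h2 : ∑ j ∈ Finset.univ.erase i, |M j i| * m ≤ |M i i| * m := by
      rw [← Finset.sum_mul]
      exact mul_le_mul_of_nonneg_right (hdom i) hm0.le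
    have h3 : ∑ x ∈ Finset.univ.erase i, |M x i| * (m - |v x|) = 0 := by
      have hnn : ∀ x ∈ Finset.univ.erase i, 0 ≤ |M x i| * (m - |v x|) :=
        fun x _ => mul_nonneg (abs_nonneg _) (sub_nonneg.mpr (hle x))
      have hexp : ∑ x ∈ Finset.univ.erase i, |M x i| * (m - |v x|)
          = (∑ x ∈ Finset.univ.erase i, |M x i| * m)
            - ∑ x ∈ Finset.univ.erase i, |M x i| * |v x| := by
        rw [← Finset.sum_sub_distrib]
        exact Finset.sum_congr rfl fun x _ => by ring
      have hle0 : ∑ x ∈ Finset.univ.erase i, |M x i| * (m - |v x|) ≤ 0 := by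
        rw [hexp]; linarith
      exact le_antisymm hle0 (Finset.sum_nonneg hnn)
    have := (Finset.sum_eq_zero_iff_of_nonneg
      (fun x _ => mul_nonneg (abs_nonneg _) (sub_nonneg.mpr (hle x)))).mp h3 j
      (Finset.mem_erase.mpr ⟨hji, Finset.mem_univ j⟩)
    rcases mul_eq_zero.mp this with h | h
    · exact absurd (abs_eq_zero.mp h) hMji
    · linarith [sub_eq_zero.mp h]
  -- all entries achieve the max, via chains
  have hall : ∀ p, |v p| = m := by
    intro p
    by_cases hp : p = i₀
    · rw [hp]
    obtain ⟨k, c, hinj, hc0, hclast, hcne⟩ := hSC p i₀ hp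
    have main : ∀ n, (hn : n ≤ k + 1) → |v (c ⟨k + 1 - n, by omega⟩)| = m := by
      intro n
      induction n with
      | zero =>
        intro _
        have : (⟨k + 1 - 0, by omega⟩ : Fin (k + 2)) = Fin.last (k + 1) := by
          ext; simp
        rw [this, hclast]
      | succ n ih =>
        intro hn
        have hn' : n ≤ k + 1 := by omega
        have hprev := ih hn'
        have hnk : n ≤ k := by omega
        set l : Fin (k + 1) := ⟨k - n, by omega⟩ with hl
        have hcast : l.castSucc = (⟨k + 1 - (n + 1), by omega⟩ : Fin (k + 2)) := by
          ext
          simp only [hl, Fin.castSucc, Fin.castAdd, Fin.castLE]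
          omega
        have hsucc : l.succ = (⟨k + 1 - n, by omega⟩ : Fin (k + 2)) := by
          ext
          simp only [hl, Fin.succ]
          omega
        have hne := hcne l
        rw [hcast, hsucc] at hne
        have hdiff : c ⟨k + 1 - (n + 1), by omega⟩ ≠ c ⟨k + 1 - n, by omega⟩ := by
          intro h
          have := hinj h
          have : k + 1 - (n + 1) = k + 1 - n := congrArg Fin.val this
          omega
        exact hS _ hprev _ hdiff hne
    have := main (k + 1) le_rfl
    have h0 : (⟨k + 1 - (k + 1), by omega⟩ : Fin (k + 2)) = 0 := by ext; simp
    rwa [h0, hc0] at this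
  -- contradiction at the strict row
  have h1 : |M i₁ i₁| * m ≤ ∑ j ∈ Finset.univ.erase i₁, |M j i₁| * |v j| := by
    rw [← hall i₁]; exact hEq i₁
  have h2 : ∑ j ∈ Finset.univ.erase i₁, |M j i₁| * |v j|
      = (∑ j ∈ Finset.univ.erase i₁, |M j i₁|) * m := by
    rw [Finset.sum_mul]
    exact Finset.sum_congr rfl fun j _ => by rw [hall j]
  have h3 : (∑ j ∈ Finset.univ.erase i₁, |M j i₁|) * m < |M i₁ i₁| * m :=
    mul_lt_mul_of_pos_right hdoms hm0
  linarith
end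

section
/- If A ∈ ℝ^{N×N} is irreducibly diagonally dominant (weakly diagonally dominant in every row, strictly in at least one row, and irreducible) and is a Z-matrix with positive diagonal entries, then A is a nonsingular M-matrix; in particular A⁻¹ exists and A⁻¹ ≥ 0 entrywise. -/
open Matrix Finset

private lemma idd_aux_row {N : ℕ} (A : Matrix (Fin N) (Fin N) ℝ)
    (hZ : ∀ i j, i ≠ j → A i j ≤ 0)
    (hdom : ∀ i, ∑ j ∈ Finset.univ.erase i, |A i j| ≤ A i i)
    (z : Fin N → ℝ) (m : ℝ) (hm : m < 0) (hmin : ∀ j, m ≤ z j)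
    (p : Fin N) (hp : z p = m) (hAz : 0 ≤ A.mulVec z p) :
    A p p ≤ ∑ j ∈ Finset.univ.erase p, |A p j| ∧
      ∀ j, A p j ≠ 0 → z j = m := by
  set R := ∑ j ∈ Finset.univ.erase p, |A p j| with hR
  have hAneg : ∀ j ∈ Finset.univ.erase p, A p j ≤ 0 := fun j hj =>
    hZ p j (Ne.symm (Finset.mem_erase.mp hj).1)
  have hterm : ∀ j ∈ Finset.univ.erase p, A p j * z j ≤ A p j * m := fun j hj =>
    mul_le_mul_of_nonpos_left (hmin j) (hAneg j hj)
  have hsum1 : ∑ j ∈ Finset.univ.erase p, A p j * z j ≤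
      ∑ j ∈ Finset.univ.erase p, A p j * m := Finset.sum_le_sum hterm
  have e0 : ∑ j ∈ Finset.univ.erase p, A p j = -R := by
    rw [hR, ← Finset.sum_neg_distrib]
    exact Finset.sum_congr rfl fun j hj => by rw [abs_of_nonpos (hAneg j hj), neg_neg]
  have e1 : ∑ j ∈ Finset.univ.erase p, A p j * m = -R * m := by
    rw [← Finset.sum_mul, e0]
  have hmv : A.mulVec z p = A p p * m + ∑ j ∈ Finset.univ.erase p, A p j * z j := by
    rw [Matrix.mulVec, dotProduct, ← Finset.add_sum_erase _ _ (Finset.mem_univ p), hp]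
  have hdomp := hdom p
  rw [hmv] at hAz
  have hle : A p p ≤ R := by nlinarith
  have hApp : A p p = R := le_antisymm hle hdomp
  have hTeq : ∑ j ∈ Finset.univ.erase p, A p j * z j =
      ∑ j ∈ Finset.univ.erase p, A p j * m := by nlinarith
  have hall := (Finset.sum_eq_sum_iff_of_le hterm).mp hTeq
  refine ⟨hle, fun j hj => ?_⟩
  by_cases hjp : j = p
  · rw [hjp, hp]
  · have := hall j (Finset.mem_erase.mpr ⟨hjp, Finset.mem_univ j⟩)
    exact mul_left_cancel₀ hj this

private lemma idd_aux_mono {N : ℕ} (A : Matrix (Fin N) (Fin N) ℝ)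
    (hZ : ∀ i j, i ≠ j → A i j ≤ 0)
    (hdom : ∀ i, ∑ j ∈ Finset.univ.erase i, |A i j| ≤ A i i)
    (hstrict : ∃ i, ∑ j ∈ Finset.univ.erase i, |A i j| < A i i)
    (hirr : ∀ p q : Fin N, p ≠ q → ∃ (m : ℕ) (k : Fin (m + 2) → Fin N),
      Function.Injective k ∧ k 0 = p ∧ k (Fin.last (m + 1)) = q ∧
      ∀ l : Fin (m + 1), A (k l.castSucc) (k l.succ) ≠ 0)
    (z : Fin N → ℝ) (hAz : ∀ i, 0 ≤ A.mulVec z i) : ∀ i, 0 ≤ z i := by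
  by_contra h
  push_neg at h
  obtain ⟨i0, hi0⟩ := h
  have hne : (Finset.univ : Finset (Fin N)).Nonempty := ⟨i0, Finset.mem_univ i0⟩
  set m := Finset.univ.inf' hne z with hmdef
  have hmin : ∀ j, m ≤ z j := fun j => Finset.inf'_le _ (Finset.mem_univ j)
  have hm : m < 0 := lt_of_le_of_lt (hmin i0) hi0
  have hSm : ∀ p, z p = m → ∀ j, A p j ≠ 0 → z j = m := fun p hp =>
    (idd_aux_row A hZ hdom z m hm hmin p hp (hAz p)).2
  obtain ⟨istar, hstar⟩ := hstrict
  have histar : z istar ≠ m := fun h =>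
    absurd (idd_aux_row A hZ hdom z m hm hmin istar h (hAz istar)).1 (not_le.mpr hstar)
  obtain ⟨p, _, hpm⟩ := Finset.exists_mem_eq_inf' hne z
  have hpm' : z p = m := hpm.symm
  have hpq : p ≠ istar := fun h => histar (h ▸ hpm')
  obtain ⟨m', k, hinj, hk0, hklast, hedge⟩ := hirr p istar hpq
  have hall : ∀ l : Fin (m' + 2), z (k l) = m := by
    intro l
    induction l using Fin.induction with
    | zero => rw [hk0]; exact hpm'
    | succ l ih => exact hSm (k l.castSucc) ih (k l.succ) (hedge l)
  exact histar (hklast ▸ hall (Fin.last (m' + 1)))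

private lemma idd_aux_det {N : ℕ} (A : Matrix (Fin N) (Fin N) ℝ)
    (hZ : ∀ i j, i ≠ j → A i j ≤ 0)
    (hdom : ∀ i, ∑ j ∈ Finset.univ.erase i, |A i j| ≤ A i i)
    (hstrict : ∃ i, ∑ j ∈ Finset.univ.erase i, |A i j| < A i i)
    (hirr : ∀ p q : Fin N, p ≠ q → ∃ (m : ℕ) (k : Fin (m + 2) → Fin N),
      Function.Injective k ∧ k 0 = p ∧ k (Fin.last (m + 1)) = q ∧
      ∀ l : Fin (m + 1), A (k l.castSucc) (k l.succ) ≠ 0) :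
    A.det ≠ 0 := by
  intro h
  obtain ⟨v, hv, hAv⟩ := Matrix.exists_mulVec_eq_zero_iff.mpr h
  have h1 : ∀ i, 0 ≤ v i := idd_aux_mono A hZ hdom hstrict hirr v (by rw [hAv]; intro i; simp)
  have h2 : ∀ i, 0 ≤ (-v) i := by
    apply idd_aux_mono A hZ hdom hstrict hirr
    intro i
    rw [Matrix.mulVec_neg, hAv]
    simp
  exact hv (funext fun i => le_antisymm (by simpa using h2 i) (h1 i))

open Matrix Finset in
theorem irreducibly_diagonally_dominant_Zmatrix_is_nonsingular_Mmatrix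
    {N : ℕ} (A : Matrix (Fin N) (Fin N) ℝ)
    (hZ : ∀ i j, i ≠ j → A i j ≤ 0)
    (hdiag : ∀ i, 0 < A i i)
    (hdom : ∀ i, ∑ j ∈ Finset.univ.erase i, |A i j| ≤ A i i)
    (hstrict : ∃ i, ∑ j ∈ Finset.univ.erase i, |A i j| < A i i)
    (hirr : ∀ p q : Fin N, p ≠ q → ∃ (m : ℕ) (k : Fin (m + 2) → Fin N),
      Function.Injective k ∧ k 0 = p ∧ k (Fin.last (m + 1)) = q ∧
      ∀ l : Fin (m + 1), A (k l.castSucc) (k l.succ) ≠ 0) :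
    (∃ (s : ℝ) (B : Matrix (Fin N) (Fin N) ℝ),
        (∀ i j, 0 ≤ B i j) ∧ A = s • (1 : Matrix (Fin N) (Fin N) ℝ) - B ∧
        ∀ μ ∈ spectrum ℂ (B.map (fun x => (x : ℂ))), ‖μ‖ < s) ∧
      IsUnit A.det ∧ ∀ i j, 0 ≤ A⁻¹ i j := by
  have hdet : A.det ≠ 0 := idd_aux_det A hZ hdom hstrict hirr
  have hunit : IsUnit A.det := isUnit_iff_ne_zero.mpr hdet
  obtain ⟨i0, -⟩ := id hstrict
  have hne : (Finset.univ : Finset (Fin N)).Nonempty := ⟨i0, Finset.mem_univ i0⟩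
  set s : ℝ := (Finset.univ.sup' hne fun i => A i i) + 1 with hsdef
  have hs : ∀ i, A i i < s := by
    intro i
    have h1 : A i i ≤ Finset.univ.sup' hne fun i => A i i :=
      Finset.le_sup' (fun i => A i i) (Finset.mem_univ i)
    rw [hsdef]; linarith
  set B : Matrix (Fin N) (Fin N) ℝ := s • (1 : Matrix (Fin N) (Fin N) ℝ) - A with hBdef
  have hAeq : A = s • (1 : Matrix (Fin N) (Fin N) ℝ) - B := by
    rw [hBdef, sub_sub_cancel]
  have hsnn : 0 < s := lt_trans (hdiag i0) (hs i0)
  have hBnn : ∀ i j, 0 ≤ B i j := by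
    intro i j
    rw [hBdef]
    by_cases hij : i = j
    · subst hij
      simp only [Matrix.sub_apply, Matrix.smul_apply, Matrix.one_apply_eq, smul_eq_mul, mul_one]
      linarith [hs i]
    · simp only [Matrix.sub_apply, Matrix.smul_apply, Matrix.one_apply_ne hij, smul_eq_mul,
        mul_zero]
      linarith [hZ i j hij]
  refine ⟨⟨s, B, hBnn, hAeq, ?_⟩, hunit, ?_⟩
  · -- spectrum bound
    intro μ hμ
    set Bc : Matrix (Fin N) (Fin N) ℂ := B.map (fun x => (x : ℂ)) with hBc
    rw [spectrum.mem_iff] at hμ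
    have hdet0 : (algebraMap ℂ (Matrix (Fin N) (Fin N) ℂ) μ - Bc).det = 0 := by
      by_contra hd
      exact hμ ((Matrix.isUnit_iff_isUnit_det _).mpr (isUnit_iff_ne_zero.mpr hd))
    obtain ⟨v, hv, hmv⟩ := Matrix.exists_mulVec_eq_zero_iff.mpr hdet0
    have hBv : Bc.mulVec v = μ • v := by
      have h1 : (algebraMap ℂ (Matrix (Fin N) (Fin N) ℂ) μ - Bc).mulVec v
          = μ • v - Bc.mulVec v := by
        rw [Matrix.sub_mulVec, Algebra.algebraMap_eq_smul_one, Matrix.smul_mulVec,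
          Matrix.one_mulVec]
      rw [h1] at hmv
      linear_combination (norm := module) -hmv
    set Ac : Matrix (Fin N) (Fin N) ℂ := A.map (fun x => (x : ℂ)) with hAc
    set lam : ℂ := (s : ℂ) - μ with hlam
    have hAcB : Ac = (s : ℂ) • (1 : Matrix (Fin N) (Fin N) ℂ) - Bc := by
      rw [hAc, hBc, hBdef]
      ext i j
      simp [Matrix.one_apply, apply_ite]
    have hAv : Ac.mulVec v = lam • v := by
      rw [hAcB, Matrix.sub_mulVec, Matrix.smul_mulVec, Matrix.one_mulVec, hBv, hlam]
      module
    -- det of Ac nonzero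
    have hdetAc : Ac.det ≠ 0 := by
      have : Ac = (algebraMap ℝ ℂ).mapMatrix A := by
        ext i j; simp [hAc, Matrix.map_apply]
      rw [this, ← RingHom.map_det]
      simp [hdet]
    have hlamne : lam ≠ 0 := by
      intro h0
      rw [h0, zero_smul] at hAv
      exact hdetAc (Matrix.exists_mulVec_eq_zero_iff.mp ⟨v, hv, hAv⟩)
    -- Gershgorin
    obtain ⟨i, _, hmax⟩ := Finset.exists_max_image Finset.univ
      (fun j => ‖v j‖) hne
    have hvi : 0 < ‖v i‖ := by
      obtain ⟨j0, hj0⟩ := Function.ne_iff.mp hv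
      exact lt_of_lt_of_le (by simpa using hj0) (hmax j0 (Finset.mem_univ j0))
    have hrow : ∑ j, (A i j : ℂ) * v j = lam * v i := by
      have := congrFun hAv i
      simpa [Matrix.mulVec, dotProduct, hAc, Matrix.map_apply] using this
    have hsplit : (lam - (A i i : ℂ)) * v i = ∑ j ∈ Finset.univ.erase i, (A i j : ℂ) * v j := by
      have := Finset.add_sum_erase Finset.univ (fun j => (A i j : ℂ) * v j) (Finset.mem_univ i)
      rw [hrow] at this
      linear_combination -this
    have habs : ‖lam - (A i i : ℂ)‖ * ‖v i‖
        ≤ (∑ j ∈ Finset.univ.erase i, |A i j|) * ‖v i‖ := by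
      rw [← norm_mul, hsplit]
      calc ‖∑ j ∈ Finset.univ.erase i, (A i j : ℂ) * v j‖
          ≤ ∑ j ∈ Finset.univ.erase i, ‖(A i j : ℂ) * v j‖ := by
            exact norm_sum_le _ _
        _ ≤ ∑ j ∈ Finset.univ.erase i, |A i j| * ‖v i‖ := by
            apply Finset.sum_le_sum
            intro j _
            rw [norm_mul, Complex.norm_real, Real.norm_eq_abs]
            exact mul_le_mul_of_nonneg_left (hmax j (Finset.mem_univ j)) (abs_nonneg _)
        _ = (∑ j ∈ Finset.univ.erase i, |A i j|) * ‖v i‖ := by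
            rw [Finset.sum_mul]
    have hgersh : ‖lam - (A i i : ℂ)‖ ≤ A i i :=
      le_trans (le_of_mul_le_mul_right habs hvi) (hdom i)
    -- real analysis of lam
    set a : ℝ := A i i with ha
    have ha0 : 0 < a := hdiag i
    have has : a < s := hs i
    have hnsq : Complex.normSq (lam - (a : ℂ)) ≤ a ^ 2 := by
      have h1 : ‖lam - (a : ℂ)‖ ^ 2 ≤ a ^ 2 := by
        have := hgersh
        nlinarith [norm_nonneg (lam - (a : ℂ))]
      rw [Complex.sq_norm] at h1
      exact h1
    have hnsq' : lam.re ^ 2 + lam.im ^ 2 ≤ 2 * a * lam.re := by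
      have : Complex.normSq (lam - (a : ℂ)) = (lam.re - a) ^ 2 + lam.im ^ 2 := by
        simp [Complex.normSq_apply, Complex.sub_re, Complex.sub_im]
        ring
      nlinarith
    have hlamnsq : 0 < lam.re ^ 2 + lam.im ^ 2 := by
      rcases lt_or_eq_of_le (by positivity : (0:ℝ) ≤ lam.re ^ 2 + lam.im ^ 2) with h | h
      · exact h
      · exfalso
        apply hlamne
        have hre : lam.re = 0 := by nlinarith [sq_nonneg lam.re, sq_nonneg lam.im]
        have him : lam.im = 0 := by nlinarith [sq_nonneg lam.re, sq_nonneg lam.im]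
        exact Complex.ext hre him
    have hrepos : 0 < lam.re := by nlinarith
    -- now μ = s - lam
    have hmu : μ = (s : ℂ) - lam := by rw [hlam]; ring
    have hmusq : ‖μ‖ ^ 2 < s ^ 2 := by
      rw [Complex.sq_norm, hmu]
      have : Complex.normSq ((s : ℂ) - lam) = (s - lam.re) ^ 2 + lam.im ^ 2 := by
        simp [Complex.normSq_apply, Complex.sub_re, Complex.sub_im]
        ring
      rw [this]
      nlinarith
    nlinarith [norm_nonneg μ, hsnn]
  · -- inverse nonneg
    intro i j
    have hmul : A * A⁻¹ = 1 := Matrix.mul_nonsing_inv A hunit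
    have := idd_aux_mono A hZ hdom hstrict hirr (fun k => A⁻¹ k j) ?_ i
    · exact this
    · intro i'
      have : A.mulVec (fun k => A⁻¹ k j) i' = (A * A⁻¹) i' j := by
        simp [Matrix.mulVec, dotProduct, Matrix.mul_apply]
      rw [this, hmul, Matrix.one_apply]
      split <;> norm_num
end
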